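/- Let M be a compact metric space and let c : (0,∞) × M × M → ℝ, written c_t(x,y), be continuous and satisfy the dynamic programming identity c_{s+t}(x,y) = inf_{z ∈ M} [c_s(x,z) + c_t(z,y)] for all s, t > 0 and all x, y ∈ M. Then for each a > 0 the family of functions {(x,y) ↦ c_t(x,y) : t ≥ a} is uniformly equicontinuous on M × M. -/

import Mathlib

open Set

private lemma inf_le_inf_add' {M : Type*} [TopologicalSpace M] [CompactSpace M] [Nonempty M]
    (g h : M → ℝ) (hg : Continuous g) (hh : Continuous h) (e : ℝ)
    (hle : ∀ z, g z ≤ h z + e) : (⨅ z, g z) ≤ (⨅ z, h z) + e := by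
  obtain ⟨z₀, -, hz₀⟩ := isCompact_univ.exists_isMinOn univ_nonempty hh.continuousOn
  have h1 : (⨅ z, g z) ≤ g z₀ := ciInf_le (isCompact_range hg).bddBelow z₀
  have h2 : h z₀ ≤ ⨅ z, h z := le_ciInf fun z => hz₀ (mem_univ z)
  linarith [hle z₀]

/-- **Equicontinuity of the costs** (Theorem `cpctc`, first part): if `M` is a compact
metric space and `c : (0,∞) × M × M → ℝ` is continuous and satisfies the dynamic
programming identity, then for each `a > 0` the family `{c_t : t ≥ a}` is uniformly
equicontinuous on `M × M`. -/
theorem cost_family_equicontinuous (M : Type*) [MetricSpace M] [CompactSpace M] [Nonempty M]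
    (c : ℝ → M → M → ℝ)
    (hc : ContinuousOn (fun p : ℝ × M × M => c p.1 p.2.1 p.2.2) {p | 0 < p.1})
    (hdpp : ∀ s t : ℝ, 0 < s → 0 < t → ∀ x y : M,
      c (s + t) x y = ⨅ z : M, (c s x z + c t z y))
    (a : ℝ) (ha : 0 < a) :
    ∀ ε > 0, ∃ δ > 0, ∀ t : ℝ, a ≤ t → ∀ x₁ y₁ x₂ y₂ : M,
      dist x₁ x₂ < δ → dist y₁ y₂ < δ → |c t x₁ y₁ - c t x₂ y₂| < ε := by
  -- continuity of each time slice
  have hslice : ∀ s : ℝ, 0 < s → Continuous (fun p : M × M => c s p.1 p.2) := by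
    intro s hs
    have : Continuous (fun p : M × M => (s, p)) := by continuity
    exact hc.comp_continuous this (fun p => hs)
  intro ε hε
  have ha2 : (0:ℝ) < a / 2 := by positivity
  have hcont := hslice (a/2) ha2
  have hUC := CompactSpace.uniformContinuous_of_continuous hcont
  rw [Metric.uniformContinuous_iff] at hUC
  obtain ⟨δ, hδ, hδ'⟩ := hUC (ε/3) (by positivity)
  refine ⟨δ, hδ, ?_⟩
  intro t ht x₁ y₁ x₂ y₂ hx hy
  have ht2 : (0:ℝ) < t - a/2 := by linarith
  have hsum : a/2 + (t - a/2) = t := by ring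
  have hsum' : (t - a/2) + a/2 = t := by ring
  -- closeness in first slot
  have key1 : ∀ u v z : M, dist u v < δ → |c (a/2) u z - c (a/2) v z| < ε/3 := by
    intro u v z huv
    have : dist ((u, z) : M × M) (v, z) < δ := by
      rw [Prod.dist_eq]
      simp only [dist_self]
      exact max_lt huv hδ
    simpa [Real.dist_eq] using hδ' this
  have key2 : ∀ u v z : M, dist u v < δ → |c (a/2) z u - c (a/2) z v| < ε/3 := by
    intro u v z huv
    have : dist ((z, u) : M × M) (z, v) < δ := by
      rw [Prod.dist_eq]
      simp only [dist_self]
      exact max_lt hδ huv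
    simpa [Real.dist_eq] using hδ' this
  -- step 1 : vary x
  have step1 : ∀ u v y : M, dist u v < δ → c t u y ≤ c t v y + ε/3 := by
    intro u v y huv
    have h1 : c t u y = ⨅ z : M, (c (a/2) u z + c (t - a/2) z y) := by
      have := hdpp _ _ ha2 ht2 u y; rwa [hsum] at this
    have h2 : c t v y = ⨅ z : M, (c (a/2) v z + c (t - a/2) z y) := by
      have := hdpp _ _ ha2 ht2 v y; rwa [hsum] at this
    rw [h1, h2]
    have hcz : Continuous (fun z : M => c (t - a/2) z y) :=
      (hslice _ ht2).comp (continuous_id.prodMk continuous_const)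
    have hcu : Continuous (fun z : M => c (a/2) u z) :=
      hcont.comp (continuous_const.prodMk continuous_id)
    have hcv : Continuous (fun z : M => c (a/2) v z) :=
      hcont.comp (continuous_const.prodMk continuous_id)
    refine inf_le_inf_add' _ _ (hcu.add hcz) (hcv.add hcz) _ ?_
    intro z
    have := key1 u v z huv
    have := abs_le.mp this.le
    simp only [Pi.add_apply]
    linarith [this.2]
  -- step 2 : vary y
  have step2 : ∀ x u v : M, dist u v < δ → c t x u ≤ c t x v + ε/3 := by
    intro x u v huv
    have h1 : c t x u = ⨅ z : M, (c (t - a/2) x z + c (a/2) z u) := by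
      have := hdpp _ _ ht2 ha2 x u; rwa [hsum'] at this
    have h2 : c t x v = ⨅ z : M, (c (t - a/2) x z + c (a/2) z v) := by
      have := hdpp _ _ ht2 ha2 x v; rwa [hsum'] at this
    rw [h1, h2]
    have hcz : Continuous (fun z : M => c (t - a/2) x z) :=
      (hslice _ ht2).comp (continuous_const.prodMk continuous_id)
    have hcu : Continuous (fun z : M => c (a/2) z u) :=
      hcont.comp (continuous_id.prodMk continuous_const)
    have hcv : Continuous (fun z : M => c (a/2) z v) :=
      hcont.comp (continuous_id.prodMk continuous_const)
    refine inf_le_inf_add' _ _ (hcz.add hcu) (hcz.add hcv) _ ?_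
    intro z
    have := key2 u v z huv
    have := abs_le.mp this.le
    simp only [Pi.add_apply]
    linarith [this.2]
  have hxx := step1 x₁ x₂ y₁ hx
  have hxx' := step1 x₂ x₁ y₁ (by rwa [dist_comm])
  have hyy := step2 x₂ y₁ y₂ hy
  have hyy' := step2 x₂ y₂ y₁ (by rwa [dist_comm])
  rw [abs_sub_lt_iff]
  constructor <;> linarith
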